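/- arXiv:2204.02831 — 2 statements merged into one kernel-verified Lean document; each statement's English description precedes it below -/
import Mathlib

section
/- Let 1/2 < α < 1, Ω the sector of radius 1 and angle π/α, and u(r,θ) = (r^{-α} - r^{α}) sin(αθ). For every p with 1 ≤ p < 2/(α+1), both u and its gradient ∇u belong to L^p(Ω); i.e. ∫_Ω |u|^p < ∞ and ∫_Ω |∇u|^p < ∞. -/
open Real Set Filter Topology MeasureTheory
open scoped ENNReal

noncomputable section

/-- the open circular sector of radius 1 and opening angle π/α. -/
def sector (α : ℝ) : Set (ℝ × ℝ) :=
  {p | ∃ r θ : ℝ, 0 < r ∧ r < 1 ∧ 0 < θ ∧ θ < π / α ∧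
    p = (r * Real.cos θ, r * Real.sin θ)}

/-- polar angle in `[0, 2π)`. -/
def angleOf (p : ℝ × ℝ) : ℝ :=
  if 0 ≤ Complex.arg (p.1 + p.2 * Complex.I) then Complex.arg (p.1 + p.2 * Complex.I)
  else Complex.arg (p.1 + p.2 * Complex.I) + 2 * π

/-- polar radius. -/
def radOf (p : ℝ × ℝ) : ℝ := Real.sqrt (p.1 ^ 2 + p.2 ^ 2)

/-- `u(r,θ) = (r^{-α} - r^{α}) sin(α θ)` in Cartesian coordinates. -/
def uex (α : ℝ) (p : ℝ × ℝ) : ℝ :=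
  (radOf p ^ (-α) - radOf p ^ α) * Real.sin (α * angleOf p)

/-- first partial derivatives -/
def pd1 (u : ℝ × ℝ → ℝ) (p : ℝ × ℝ) : ℝ := deriv (fun t => u (t, p.2)) p.1
def pd2 (u : ℝ × ℝ → ℝ) (p : ℝ × ℝ) : ℝ := deriv (fun t => u (p.1, t)) p.2

/-- second partial derivatives -/
def pd11 (u : ℝ × ℝ → ℝ) (p : ℝ × ℝ) : ℝ :=
  deriv (fun s => deriv (fun t => u (t, p.2)) s) p.1
def pd22 (u : ℝ × ℝ → ℝ) (p : ℝ × ℝ) : ℝ :=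
  deriv (fun s => deriv (fun t => u (p.1, t)) s) p.2

/-- Euclidean norm of the gradient -/
def gradNorm (u : ℝ × ℝ → ℝ) (p : ℝ × ℝ) : ℝ :=
  Real.sqrt ((pd1 u p) ^ 2 + (pd2 u p) ^ 2)

end


lemma radOf_polar (r θ : ℝ) (hr : 0 ≤ r) : radOf (r * Real.cos θ, r * Real.sin θ) = r := by
  have : (r * Real.cos θ) ^ 2 + (r * Real.sin θ) ^ 2 = r ^ 2 := by
    have := Real.sin_sq_add_cos_sq θ; nlinarith
  rw [radOf, this, Real.sqrt_sq hr]

lemma angleOf_polar (r θ : ℝ) (hr : 0 < r) (h0 : 0 < θ) (h2 : θ < 2 * π) :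
    angleOf (r * Real.cos θ, r * Real.sin θ) = θ := by
  have key : ∀ φ : ℝ, φ ∈ Set.Ioc (-π) π → Real.cos φ = Real.cos θ → Real.sin φ = Real.sin θ →
      Complex.arg (((r * Real.cos θ, r * Real.sin θ) : ℝ × ℝ).1 +
        ((r * Real.cos θ, r * Real.sin θ) : ℝ × ℝ).2 * Complex.I) = φ := by
    intro φ hφ hc hs
    have heq : ((r * Real.cos θ : ℝ) : ℂ) + (r * Real.sin θ : ℝ) * Complex.I =
        (r : ℝ) * (Complex.cos φ + Complex.sin φ * Complex.I) := by
      rw [← Complex.ofReal_cos, ← Complex.ofReal_sin, hc, hs]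
      push_cast
      ring
    rw [show (((r * Real.cos θ, r * Real.sin θ) : ℝ × ℝ).1 : ℂ) +
        ((r * Real.cos θ, r * Real.sin θ) : ℝ × ℝ).2 * Complex.I =
        (r : ℝ) * (Complex.cos φ + Complex.sin φ * Complex.I) from heq]
    exact Complex.arg_mul_cos_add_sin_mul_I hr hφ
  rcases le_or_gt θ π with hθ | hθ
  · have harg := key θ ⟨by linarith [Real.pi_pos], hθ⟩ rfl rfl
    rw [angleOf]; rw [harg]; simp [if_pos (by linarith : (0:ℝ) ≤ θ)]
  · have harg := key (θ - 2 * π) ⟨by linarith, by linarith [Real.pi_pos]⟩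
      (by rw [Real.cos_sub_two_pi]) (by rw [Real.sin_sub_two_pi])
    rw [angleOf]; rw [harg, if_neg (by push_neg; linarith [Real.pi_pos])]
    ring

lemma sqrt_one_add_div_sq (x y : ℝ) (hy : y ≠ 0) :
    Real.sqrt (1 + (x / y) ^ 2) = Real.sqrt (x ^ 2 + y ^ 2) / |y| := by
  rw [show (1 + (x / y) ^ 2 : ℝ) = (x ^ 2 + y ^ 2) / y ^ 2 by field_simp; ring,
    Real.sqrt_div' _ (by positivity), Real.sqrt_sq_eq_abs]

lemma angleOf_eq (x y : ℝ) (hy : y ≠ 0) :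
    angleOf (x, y) = (if 0 < y then π / 2 else 3 * π / 2) - Real.arctan (x / y) := by
  have hR0 : (0:ℝ) < Real.sqrt (x ^ 2 + y ^ 2) := Real.sqrt_pos.2 (by positivity)
  set R : ℝ := Real.sqrt (x ^ 2 + y ^ 2) with hRdef
  have hRsq : R ^ 2 = x ^ 2 + y ^ 2 := Real.sq_sqrt (by positivity)
  have ha1 := Real.arctan_lt_pi_div_two (x / y)
  have ha2 := Real.neg_pi_div_two_lt_arctan (x / y)
  have hpi := Real.pi_pos
  rcases hy.lt_or_gt with hneg | hpos
  · -- y < 0, c = 3π/2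
    have habs : |y| = -y := abs_of_neg hneg
    have hsq : Real.sqrt (1 + (x / y) ^ 2) = R / (-y) := by
      rw [sqrt_one_add_div_sq x y hy, habs]
    set θ : ℝ := 3 * π / 2 - Real.arctan (x / y) with hθdef
    have hcos : Real.cos θ = x / R := by
      rw [hθdef, show (3 * π / 2 : ℝ) = π + π / 2 by ring, Real.cos_sub, Real.cos_add,
        Real.sin_add, Real.sin_arctan, Real.cos_arctan, hsq]
      simp
      field_simp
    have hsin : Real.sin θ = y / R := by
      rw [hθdef, show (3 * π / 2 : ℝ) = π + π / 2 by ring, Real.sin_sub, Real.cos_add,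
        Real.sin_add, Real.sin_arctan, Real.cos_arctan, hsq]
      simp
      field_simp
    have hxy : (x, y) = (R * Real.cos θ, R * Real.sin θ) := by
      rw [hcos, hsin]; field_simp
    rw [if_neg (by linarith), ← hθdef]
    conv_lhs => rw [hxy]
    exact angleOf_polar R θ hR0 (by rw [hθdef]; linarith) (by rw [hθdef]; linarith)
  · -- 0 < y, c = π/2
    have habs : |y| = y := abs_of_pos hpos
    have hsq : Real.sqrt (1 + (x / y) ^ 2) = R / y := by
      rw [sqrt_one_add_div_sq x y hy, habs]
    set θ : ℝ := π / 2 - Real.arctan (x / y) with hθdef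
    have hcos : Real.cos θ = x / R := by
      rw [hθdef, Real.cos_pi_div_two_sub, Real.sin_arctan, hsq]
      field_simp
    have hsin : Real.sin θ = y / R := by
      rw [hθdef, Real.sin_pi_div_two_sub, Real.cos_arctan, hsq]
      field_simp
    have hxy : (x, y) = (R * Real.cos θ, R * Real.sin θ) := by
      rw [hcos, hsin]; field_simp
    rw [if_pos hpos, ← hθdef]
    conv_lhs => rw [hxy]
    exact angleOf_polar R θ hR0 (by rw [hθdef]; linarith) (by rw [hθdef]; linarith)

-- abstract bound for the derivative expression
lemma absD_bound (α R q d S C : ℝ) (hα0 : 0 < α) (hα1 : α < 1) (hR0 : 0 < R) (hR1 : R < 1)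
    (hq : |q| ≤ 1) (hd : |d| ≤ 1 / R) (hS : |S| ≤ 1) (hC : |C| ≤ 1) :
    |(q * -α * R ^ (-α - 1) - q * α * R ^ (α - 1)) * S + (R ^ (-α) - R ^ α) * (C * (α * d))| ≤
      3 * R ^ (-α - 1) := by
  have hcmp : R ^ (α - 1) ≤ R ^ (-α - 1) :=
    Real.rpow_le_rpow_of_exponent_ge hR0 hR1.le (by linarith)
  have hcmp2 : R ^ α ≤ R ^ (-α) :=
    Real.rpow_le_rpow_of_exponent_ge hR0 hR1.le (by linarith)
  have hp1 : (0:ℝ) < R ^ (-α - 1) := Real.rpow_pos_of_pos hR0 _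
  have hp2 : (0:ℝ) < R ^ (α - 1) := Real.rpow_pos_of_pos hR0 _
  have hp3 : (0:ℝ) < R ^ (-α) := Real.rpow_pos_of_pos hR0 _
  have hp4 : (0:ℝ) < R ^ α := Real.rpow_pos_of_pos hR0 _
  have hmul : R ^ (-α) * (1 / R) = R ^ (-α - 1) := by
    rw [show (-α - 1 : ℝ) = -α + (-1) by ring, Real.rpow_add hR0, Real.rpow_neg_one]
    field_simp
  have h1 : |(q * -α * R ^ (-α - 1) - q * α * R ^ (α - 1)) * S| ≤ 2 * R ^ (-α - 1) := by
    rw [abs_mul]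
    have e : |q * -α * R ^ (-α - 1) - q * α * R ^ (α - 1)| ≤ 2 * R ^ (-α - 1) := by
      calc |q * -α * R ^ (-α - 1) - q * α * R ^ (α - 1)|
          ≤ |q * -α * R ^ (-α - 1)| + |q * α * R ^ (α - 1)| := abs_sub _ _
        _ = |q| * α * R ^ (-α - 1) + |q| * α * R ^ (α - 1) := by
            rw [abs_mul, abs_mul, abs_mul, abs_mul, abs_neg, abs_of_pos hα0,
              abs_of_pos hp1, abs_of_pos hp2]
        _ ≤ 2 * R ^ (-α - 1) := by
            have hqa : |q| * α ≤ 1 := by nlinarith [abs_nonneg q]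
            nlinarith [mul_le_mul_of_nonneg_right hqa hp1.le,
              mul_le_mul_of_nonneg_right hqa hp2.le]
    calc |q * -α * R ^ (-α - 1) - q * α * R ^ (α - 1)| * |S|
        ≤ (2 * R ^ (-α - 1)) * 1 := by
          apply mul_le_mul e hS (abs_nonneg _) (by positivity)
      _ = 2 * R ^ (-α - 1) := by ring
  have h2 : |(R ^ (-α) - R ^ α) * (C * (α * d))| ≤ R ^ (-α - 1) := by
    rw [abs_mul]
    have e1 : |R ^ (-α) - R ^ α| ≤ R ^ (-α) := by
      rw [abs_of_nonneg (by linarith)]; linarith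
    have e2 : |C * (α * d)| ≤ 1 / R := by
      rw [abs_mul, abs_mul, abs_of_pos hα0]
      calc |C| * (α * |d|) ≤ 1 * (1 * (1 / R)) := by
            apply mul_le_mul hC _ (by positivity) zero_le_one
            apply mul_le_mul hα1.le hd (abs_nonneg _) zero_le_one
        _ = 1 / R := by ring
    calc |R ^ (-α) - R ^ α| * |C * (α * d)| ≤ R ^ (-α) * (1 / R) := by
          apply mul_le_mul e1 e2 (abs_nonneg _) hp3.le
      _ = R ^ (-α - 1) := hmul
  calc |(q * -α * R ^ (-α - 1) - q * α * R ^ (α - 1)) * S + (R ^ (-α) - R ^ α) * (C * (α * d))|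
      ≤ |(q * -α * R ^ (-α - 1) - q * α * R ^ (α - 1)) * S| +
        |(R ^ (-α) - R ^ α) * (C * (α * d))| := abs_add_le _ _
    _ ≤ 2 * R ^ (-α - 1) + R ^ (-α - 1) := add_le_add h1 h2
    _ = 3 * R ^ (-α - 1) := by ring

lemma pd1_bound (α x y : ℝ) (hα0 : 0 < α) (hα1 : α < 1) (hy : y ≠ 0)
    (hr1 : Real.sqrt (x ^ 2 + y ^ 2) < 1) :
    |pd1 (uex α) (x, y)| ≤ 3 * Real.sqrt (x ^ 2 + y ^ 2) ^ (-α - 1) := by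
  have hR0 : (0:ℝ) < Real.sqrt (x ^ 2 + y ^ 2) := Real.sqrt_pos.2 (by positivity)
  set R : ℝ := Real.sqrt (x ^ 2 + y ^ 2) with hRdef
  have hRsq : R ^ 2 = x ^ 2 + y ^ 2 := Real.sq_sqrt (by positivity)
  set c : ℝ := if 0 < y then π / 2 else 3 * π / 2 with hcdef
  -- the function of t
  have hfun : (fun t => uex α (t, y)) =
      fun t => (Real.sqrt (t ^ 2 + y ^ 2) ^ (-α) - Real.sqrt (t ^ 2 + y ^ 2) ^ α) *
        Real.sin (α * (c - Real.arctan (t / y))) := by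
    funext t
    rw [uex, show radOf (t, y) = Real.sqrt (t ^ 2 + y ^ 2) from rfl,
      show angleOf (t, y) = c - Real.arctan (t / y) from angleOf_eq t y hy]
  -- derivative chain
  have hsq : HasDerivAt (fun t : ℝ => t ^ 2 + y ^ 2) (2 * x) x := by
    simpa using (hasDerivAt_pow 2 x).add_const (y ^ 2)
  have hRd : HasDerivAt (fun t => Real.sqrt (t ^ 2 + y ^ 2)) (2 * x / (2 * R)) x :=
    hsq.sqrt (by positivity)
  have h1 : HasDerivAt (fun t => Real.sqrt (t ^ 2 + y ^ 2) ^ (-α))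
      (2 * x / (2 * R) * -α * R ^ (-α - 1)) x :=
    hRd.rpow_const (p := -α) (Or.inl hR0.ne')
  have h2 : HasDerivAt (fun t => Real.sqrt (t ^ 2 + y ^ 2) ^ α)
      (2 * x / (2 * R) * α * R ^ (α - 1)) x :=
    hRd.rpow_const (Or.inl hR0.ne')
  have hdiv : HasDerivAt (fun t : ℝ => t / y) (1 / y) x := by
    simpa using (hasDerivAt_id x).div_const y
  have harct : HasDerivAt (fun t => Real.arctan (t / y))
      (1 / (1 + (x / y) ^ 2) * (1 / y)) x :=
    by have h := (Real.hasDerivAt_arctan (x / y)).comp x hdiv; exact h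
  have hin : HasDerivAt (fun t => α * (c - Real.arctan (t / y)))
      (α * -(1 / (1 + (x / y) ^ 2) * (1 / y))) x :=
    (harct.const_sub c).const_mul α
  have hsin : HasDerivAt (fun t => Real.sin (α * (c - Real.arctan (t / y))))
      (Real.cos (α * (c - Real.arctan (x / y))) * (α * -(1 / (1 + (x / y) ^ 2) * (1 / y)))) x :=
    hin.sin
  have hmul := (h1.sub h2).mul hsin
  have hderiv : pd1 (uex α) (x, y) =
      (2 * x / (2 * R) * -α * R ^ (-α - 1) - 2 * x / (2 * R) * α * R ^ (α - 1)) *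
        Real.sin (α * (c - Real.arctan (x / y))) +
      (R ^ (-α) - R ^ α) *
        (Real.cos (α * (c - Real.arctan (x / y))) * (α * -(1 / (1 + (x / y) ^ 2) * (1 / y)))) := by
    rw [pd1]
    simp only
    rw [hfun]
    exact hmul.deriv
  rw [hderiv]
  apply absD_bound α R _ _ _ _ hα0 hα1 hR0 hr1
  · -- |2x/(2R)| ≤ 1
    rw [abs_div]
    rw [div_le_one (by positivity)]
    have : |x| ≤ R := by
      rw [hRdef, ← Real.sqrt_sq_eq_abs]
      exact Real.sqrt_le_sqrt (by nlinarith)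
    rw [abs_mul, abs_mul, abs_two, abs_of_pos hR0]
    nlinarith [abs_nonneg x]
  · -- |-(1/(1+(x/y)^2) * (1/y))| ≤ 1/R
    have hval : -(1 / (1 + (x / y) ^ 2) * (1 / y)) = -y / (x ^ 2 + y ^ 2) := by
      field_simp
      ring
    rw [hval, abs_div, abs_neg]
    rw [div_le_div_iff₀ (by positivity) hR0]
    have hyR : |y| ≤ R := by
      rw [hRdef, ← Real.sqrt_sq_eq_abs]
      exact Real.sqrt_le_sqrt (by nlinarith)
    calc |y| * R ≤ R * R := by nlinarith [abs_nonneg y]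
      _ = x ^ 2 + y ^ 2 := by nlinarith
      _ = |x ^ 2 + y ^ 2| * 1 := by
          rw [abs_of_pos (by positivity : (0:ℝ) < x ^ 2 + y ^ 2)]; ring
      _ = 1 * |x ^ 2 + y ^ 2| := by ring
  · exact Real.abs_sin_le_one _
  · exact Real.abs_cos_le_one _

lemma pd2_bound (α x y : ℝ) (hα0 : 0 < α) (hα1 : α < 1) (hy : y ≠ 0)
    (hr1 : Real.sqrt (x ^ 2 + y ^ 2) < 1) :
    |pd2 (uex α) (x, y)| ≤ 3 * Real.sqrt (x ^ 2 + y ^ 2) ^ (-α - 1) := by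
  have hR0 : (0:ℝ) < Real.sqrt (x ^ 2 + y ^ 2) := Real.sqrt_pos.2 (by positivity)
  set R : ℝ := Real.sqrt (x ^ 2 + y ^ 2) with hRdef
  have hRsq : R ^ 2 = x ^ 2 + y ^ 2 := Real.sq_sqrt (by positivity)
  set c : ℝ := if 0 < y then π / 2 else 3 * π / 2 with hcdef
  have hsq : HasDerivAt (fun t : ℝ => x ^ 2 + t ^ 2) (2 * y) y := by
    simpa using (hasDerivAt_pow 2 y).const_add (x ^ 2)
  have hRd : HasDerivAt (fun t => Real.sqrt (x ^ 2 + t ^ 2)) (2 * y / (2 * R)) y :=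
    hsq.sqrt (by positivity)
  have h1 : HasDerivAt (fun t => Real.sqrt (x ^ 2 + t ^ 2) ^ (-α))
      (2 * y / (2 * R) * -α * R ^ (-α - 1)) y :=
    hRd.rpow_const (p := -α) (Or.inl hR0.ne')
  have h2 : HasDerivAt (fun t => Real.sqrt (x ^ 2 + t ^ 2) ^ α)
      (2 * y / (2 * R) * α * R ^ (α - 1)) y :=
    hRd.rpow_const (Or.inl hR0.ne')
  have hdiv : HasDerivAt (fun t : ℝ => x / t) (-(x / y ^ 2)) y := by
    have := (hasDerivAt_const y x).div (hasDerivAt_id y) hy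
    exact this.congr_deriv (by simp only [id]; ring)
  have harct : HasDerivAt (fun t => Real.arctan (x / t))
      (1 / (1 + (x / y) ^ 2) * -(x / y ^ 2)) y :=
    (Real.hasDerivAt_arctan (x / y)).comp y hdiv
  have hin : HasDerivAt (fun t => α * (c - Real.arctan (x / t)))
      (α * -(1 / (1 + (x / y) ^ 2) * -(x / y ^ 2))) y :=
    (harct.const_sub c).const_mul α
  have hsin : HasDerivAt (fun t => Real.sin (α * (c - Real.arctan (x / t))))
      (Real.cos (α * (c - Real.arctan (x / y))) *
        (α * -(1 / (1 + (x / y) ^ 2) * -(x / y ^ 2)))) y :=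
    hin.sin
  have hmul := (h1.sub h2).mul hsin
  have hev : (fun t => uex α (x, t)) =ᶠ[𝓝 y]
      (fun t => (Real.sqrt (x ^ 2 + t ^ 2) ^ (-α) - Real.sqrt (x ^ 2 + t ^ 2) ^ α) *
        Real.sin (α * (c - Real.arctan (x / t)))) := by
    rcases hy.lt_or_gt with hneg | hpos
    · filter_upwards [Iio_mem_nhds hneg] with t ht
      rw [uex, show radOf (x, t) = Real.sqrt (x ^ 2 + t ^ 2) from rfl,
        angleOf_eq x t (ne_of_lt ht), hcdef,
        if_neg (not_lt.2 (le_of_lt (show t < 0 from ht))), if_neg (not_lt.2 hneg.le)]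
    · filter_upwards [Ioi_mem_nhds hpos] with t ht
      rw [uex, show radOf (x, t) = Real.sqrt (x ^ 2 + t ^ 2) from rfl,
        angleOf_eq x t (ne_of_gt ht), hcdef, if_pos (show 0 < t from ht), if_pos hpos]
  have hfinal : HasDerivAt (fun t => uex α (x, t))
      ((2 * y / (2 * R) * -α * R ^ (-α - 1) - 2 * y / (2 * R) * α * R ^ (α - 1)) *
        Real.sin (α * (c - Real.arctan (x / y))) +
      (R ^ (-α) - R ^ α) *
        (Real.cos (α * (c - Real.arctan (x / y))) *
          (α * -(1 / (1 + (x / y) ^ 2) * -(x / y ^ 2))))) y :=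
    hmul.congr_of_eventuallyEq hev
  have hderiv : pd2 (uex α) (x, y) =
      (2 * y / (2 * R) * -α * R ^ (-α - 1) - 2 * y / (2 * R) * α * R ^ (α - 1)) *
        Real.sin (α * (c - Real.arctan (x / y))) +
      (R ^ (-α) - R ^ α) *
        (Real.cos (α * (c - Real.arctan (x / y))) *
          (α * -(1 / (1 + (x / y) ^ 2) * -(x / y ^ 2)))) := by
    rw [pd2]
    simp only
    exact hfinal.deriv
  rw [hderiv]
  apply absD_bound α R _ _ _ _ hα0 hα1 hR0 hr1
  · rw [abs_div]
    rw [div_le_one (by positivity)]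
    have : |y| ≤ R := by
      rw [hRdef, ← Real.sqrt_sq_eq_abs]
      exact Real.sqrt_le_sqrt (by nlinarith)
    rw [abs_mul, abs_mul, abs_two, abs_of_pos hR0]
    nlinarith [abs_nonneg y]
  · have hval : -(1 / (1 + (x / y) ^ 2) * -(x / y ^ 2)) = x / (x ^ 2 + y ^ 2) := by
      field_simp
      ring
    rw [hval, abs_div]
    rw [div_le_div_iff₀ (by positivity) hR0]
    have hxR : |x| ≤ R := by
      rw [hRdef, ← Real.sqrt_sq_eq_abs]
      exact Real.sqrt_le_sqrt (by nlinarith)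
    calc |x| * R ≤ R * R := by nlinarith [abs_nonneg x]
      _ = x ^ 2 + y ^ 2 := by nlinarith
      _ = |x ^ 2 + y ^ 2| * 1 := by
          rw [abs_of_pos (by positivity : (0:ℝ) < x ^ 2 + y ^ 2)]; ring
      _ = 1 * |x ^ 2 + y ^ 2| := by ring
  · exact Real.abs_sin_le_one _
  · exact Real.abs_cos_le_one _

lemma grad_bound (α : ℝ) (p : ℝ × ℝ) (hα0 : 0 < α) (hα1 : α < 1) (hy : p.2 ≠ 0)
    (hr1 : radOf p < 1) : gradNorm (uex α) p ≤ 6 * radOf p ^ (-α - 1) := by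
  obtain ⟨x, y⟩ := p
  have hr1' : Real.sqrt (x ^ 2 + y ^ 2) < 1 := hr1
  have h1 := pd1_bound α x y hα0 hα1 hy hr1'
  have h2 := pd2_bound α x y hα0 hα1 hy hr1'
  have hR : radOf (x, y) = Real.sqrt (x ^ 2 + y ^ 2) := rfl
  rw [gradNorm, hR]
  have habs : Real.sqrt (pd1 (uex α) (x, y) ^ 2 + pd2 (uex α) (x, y) ^ 2) ≤
      |pd1 (uex α) (x, y)| + |pd2 (uex α) (x, y)| := by
    rw [show |pd1 (uex α) (x, y)| + |pd2 (uex α) (x, y)| =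
      Real.sqrt ((|pd1 (uex α) (x, y)| + |pd2 (uex α) (x, y)|) ^ 2) from
      (Real.sqrt_sq (by positivity)).symm]
    apply Real.sqrt_le_sqrt
    nlinarith [abs_nonneg (pd1 (uex α) (x, y)), abs_nonneg (pd2 (uex α) (x, y)),
      sq_abs (pd1 (uex α) (x, y)), sq_abs (pd2 (uex α) (x, y)),
      mul_nonneg (abs_nonneg (pd1 (uex α) (x, y))) (abs_nonneg (pd2 (uex α) (x, y)))]
  linarith

lemma uex_bound (α : ℝ) (p : ℝ × ℝ) (hα0 : 0 < α) (hα1 : α < 1)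
    (h0 : 0 < radOf p) (h1 : radOf p < 1) : |uex α p| ≤ 6 * radOf p ^ (-α - 1) := by
  set R := radOf p with hRdef
  have hcmp2 : R ^ α ≤ R ^ (-α) := Real.rpow_le_rpow_of_exponent_ge h0 h1.le (by linarith)
  have hcmp3 : R ^ (-α) ≤ R ^ (-α - 1) :=
    Real.rpow_le_rpow_of_exponent_ge h0 h1.le (by linarith)
  have hp1 : (0:ℝ) < R ^ (-α - 1) := Real.rpow_pos_of_pos h0 _
  rw [uex, abs_mul]
  calc |R ^ (-α) - R ^ α| * |Real.sin (α * angleOf p)| ≤ R ^ (-α) * 1 := by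
        apply mul_le_mul _ (Real.abs_sin_le_one _) (abs_nonneg _)
          (Real.rpow_pos_of_pos h0 _).le
        rw [abs_of_nonneg (by linarith)]
        show R ^ (-α) - R ^ α ≤ R ^ (-α)
        linarith [Real.rpow_pos_of_pos h0 α]
    _ ≤ 6 * R ^ (-α - 1) := by nlinarith

lemma radOf_nonneg (p : ℝ × ℝ) : 0 ≤ radOf p := Real.sqrt_nonneg _

lemma rad_meas : Measurable radOf :=
  (Real.continuous_sqrt.comp ((continuous_fst.pow 2).add (continuous_snd.pow 2))).measurable

lemma angle_meas : Measurable angleOf := by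
  have harg : Measurable fun q : ℝ × ℝ => Complex.arg (q.1 + q.2 * Complex.I) :=
    Complex.measurable_arg.comp
      ((Complex.measurable_ofReal.comp measurable_fst).add
        ((Complex.measurable_ofReal.comp measurable_snd).mul_const Complex.I))
  unfold angleOf
  exact Measurable.ite (measurableSet_le measurable_const harg) harg (harg.add_const (2 * π))

lemma sector_eq (α : ℝ) (hα1 : 1/2 < α) (hα2 : α < 1) :
    sector α = {q : ℝ × ℝ | (0 < radOf q ∧ radOf q < 1) ∧
      (0 < angleOf q ∧ angleOf q < π / α)} := by
  have hπα : π / α < 2 * π := by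
    rw [div_lt_iff₀ (by linarith : (0:ℝ) < α)]
    nlinarith [Real.pi_pos]
  ext q
  constructor
  · rintro ⟨r, θ, hr0, hr1, hθ0, hθ1, rfl⟩
    have h2 : θ < 2 * π := lt_trans hθ1 hπα
    rw [mem_setOf_eq, radOf_polar r θ hr0.le, angleOf_polar r θ hr0 hθ0 h2]
    exact ⟨⟨hr0, hr1⟩, hθ0, hθ1⟩
  · rintro ⟨⟨h0, h1⟩, h2, h3⟩
    refine ⟨radOf q, angleOf q, h0, h1, h2, h3, ?_⟩
    set z : ℂ := q.1 + q.2 * Complex.I with hz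
    have hzre : z.re = q.1 := by simp [hz]
    have hzim : z.im = q.2 := by simp [hz]
    have habs : ‖z‖ = radOf q := by
      rw [Complex.norm_def, Complex.normSq_apply, hzre, hzim, radOf]
      congr 1
      ring
    have hzne : z ≠ 0 := by
      intro h
      rw [h, norm_zero] at habs
      exact h0.ne' habs.symm
    have hcos : Real.cos (angleOf q) = Real.cos z.arg := by
      rw [angleOf]
      split
      · rfl
      · rw [Real.cos_add_two_pi]
    have hsin : Real.sin (angleOf q) = Real.sin z.arg := by
      rw [angleOf]
      split
      · rfl
      · rw [Real.sin_add_two_pi]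
    have e1 : radOf q * Real.cos (angleOf q) = q.1 := by
      rw [hcos, Complex.cos_arg hzne, hzre, habs]
      field_simp
    have e2 : radOf q * Real.sin (angleOf q) = q.2 := by
      rw [hsin, Complex.sin_arg, hzim, habs]
      field_simp
    rw [e1, e2]

lemma finite_aux (s : ℝ) (hs0 : 0 < s) (hs2 : s < 2) :
    ∫⁻ x in {p : ℝ × ℝ | 0 < radOf p ∧ radOf p < 1}, ENNReal.ofReal (radOf x ^ (-s)) < ⊤ := by
  set S : ℕ → Set (ℝ × ℝ) := fun n =>
    {p | (2:ℝ) ^ (-(n:ℝ) - 1) ≤ radOf p ∧ radOf p < (2:ℝ) ^ (-(n:ℝ))} with hS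
  have hsub : {p : ℝ × ℝ | 0 < radOf p ∧ radOf p < 1} ⊆ ⋃ n, S n := by
    rintro q ⟨h0, h1⟩
    obtain ⟨n, hn1, hn2⟩ := exists_mem_Ico_zpow (x := radOf q) (y := (2:ℝ)) h0 one_lt_two
    have hn0 : n < 0 := by
      by_contra h
      push_neg at h
      have : ((2:ℝ) ^ (0:ℤ)) ≤ 2 ^ n := zpow_le_zpow_right₀ one_le_two h
      rw [zpow_zero] at this
      linarith
    have hmdef : ((-(n+1)).toNat : ℤ) = -(n+1) := Int.toNat_of_nonneg (by linarith)
    refine mem_iUnion.2 ⟨(-(n+1)).toNat, ?_, ?_⟩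
    · have e : (2:ℝ) ^ (-(((-(n+1)).toNat : ℕ) : ℝ) - 1) = (2:ℝ) ^ (n : ℤ) := by
        rw [← Real.rpow_intCast 2 n]
        congr 1
        have : (((-(n+1)).toNat : ℕ) : ℝ) = -((n:ℝ)+1) := by
          exact_mod_cast congrArg (fun m : ℤ => (m : ℝ)) hmdef
        rw [this]; ring
      rw [e]; exact hn1
    · have e : (2:ℝ) ^ (-(((-(n+1)).toNat : ℕ) : ℝ)) = (2:ℝ) ^ ((n+1) : ℤ) := by
        rw [← Real.rpow_intCast 2 (n+1)]
        congr 1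
        have : (((-(n+1)).toNat : ℕ) : ℝ) = -((n:ℝ)+1) := by
          exact_mod_cast congrArg (fun m : ℤ => (m : ℝ)) hmdef
        rw [this]; push_cast; ring
      rw [e]; exact hn2
  have hbound : ∀ n : ℕ, (∫⁻ x in S n, ENNReal.ofReal (radOf x ^ (-s))) ≤
      ENNReal.ofReal (4 * 2 ^ s) * ENNReal.ofReal ((2:ℝ) ^ (s - 2)) ^ n := by
    intro n
    have hSmeas : MeasurableSet (S n) := by
      have : S n = radOf ⁻¹' (Ico ((2:ℝ) ^ (-(n:ℝ) - 1)) ((2:ℝ) ^ (-(n:ℝ)))) := rfl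
      rw [this]
      exact rad_meas measurableSet_Ico
    have hpt : ∀ᵐ x ∂(volume.restrict (S n)), ENNReal.ofReal (radOf x ^ (-s)) ≤
        ENNReal.ofReal ((2:ℝ) ^ (((n:ℝ) + 1) * s)) := by
      refine (ae_restrict_mem hSmeas).mono fun x hx => ?_
      apply ENNReal.ofReal_le_ofReal
      have h1 : (0:ℝ) < 2 ^ (-(n:ℝ) - 1) := Real.rpow_pos_of_pos two_pos _
      calc radOf x ^ (-s) ≤ ((2:ℝ) ^ (-(n:ℝ) - 1)) ^ (-s) :=
            Real.rpow_le_rpow_of_nonpos h1 hx.1 (by linarith)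
        _ = (2:ℝ) ^ (((n:ℝ) + 1) * s) := by
            rw [← Real.rpow_mul (by norm_num : (0:ℝ) ≤ 2)]
            congr 1
            ring
    have hvol : volume (S n) ≤
        ENNReal.ofReal ((2:ℝ) ^ (-(n:ℝ)) + (2:ℝ) ^ (-(n:ℝ))) *
          ENNReal.ofReal ((2:ℝ) ^ (-(n:ℝ)) + (2:ℝ) ^ (-(n:ℝ))) := by
      have hsq : S n ⊆ Icc (-(2:ℝ) ^ (-(n:ℝ))) ((2:ℝ) ^ (-(n:ℝ))) ×ˢ
          Icc (-(2:ℝ) ^ (-(n:ℝ))) ((2:ℝ) ^ (-(n:ℝ))) := by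
        rintro ⟨a, b⟩ ⟨_, hub⟩
        have hr : radOf (a, b) = Real.sqrt (a ^ 2 + b ^ 2) := rfl
        have ha : |a| ≤ radOf (a, b) := by
          rw [hr, ← Real.sqrt_sq_eq_abs]
          exact Real.sqrt_le_sqrt (by nlinarith)
        have hb : |b| ≤ radOf (a, b) := by
          rw [hr, ← Real.sqrt_sq_eq_abs]
          exact Real.sqrt_le_sqrt (by nlinarith)
        have ha' := abs_le.1 (le_of_lt (lt_of_le_of_lt ha hub))
        have hb' := abs_le.1 (le_of_lt (lt_of_le_of_lt hb hub))
        exact ⟨ha', hb'⟩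
      calc volume (S n) ≤ volume (Icc (-(2:ℝ) ^ (-(n:ℝ))) ((2:ℝ) ^ (-(n:ℝ))) ×ˢ
          Icc (-(2:ℝ) ^ (-(n:ℝ))) ((2:ℝ) ^ (-(n:ℝ)))) := measure_mono hsq
        _ = ENNReal.ofReal ((2:ℝ) ^ (-(n:ℝ)) + (2:ℝ) ^ (-(n:ℝ))) *
            ENNReal.ofReal ((2:ℝ) ^ (-(n:ℝ)) + (2:ℝ) ^ (-(n:ℝ))) := by
            rw [show (volume : Measure (ℝ × ℝ)) = (volume : Measure ℝ).prod volume from rfl,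
              Measure.prod_prod, Real.volume_Icc]
            congr 2 <;> ring
    calc (∫⁻ x in S n, ENNReal.ofReal (radOf x ^ (-s)))
        ≤ ∫⁻ _x in S n, ENNReal.ofReal ((2:ℝ) ^ (((n:ℝ) + 1) * s)) := lintegral_mono_ae hpt
      _ = ENNReal.ofReal ((2:ℝ) ^ (((n:ℝ) + 1) * s)) * volume (S n) := setLIntegral_const _ _
      _ ≤ ENNReal.ofReal ((2:ℝ) ^ (((n:ℝ) + 1) * s)) *
          (ENNReal.ofReal ((2:ℝ) ^ (-(n:ℝ)) + (2:ℝ) ^ (-(n:ℝ))) *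
            ENNReal.ofReal ((2:ℝ) ^ (-(n:ℝ)) + (2:ℝ) ^ (-(n:ℝ)))) := by
          exact mul_le_mul_right hvol _
      _ = ENNReal.ofReal ((2:ℝ) ^ (((n:ℝ) + 1) * s) *
            ((2:ℝ) ^ (-(n:ℝ)) + (2:ℝ) ^ (-(n:ℝ))) *
            ((2:ℝ) ^ (-(n:ℝ)) + (2:ℝ) ^ (-(n:ℝ)))) := by
          rw [← ENNReal.ofReal_mul (by positivity), ← ENNReal.ofReal_mul (by positivity),
            mul_assoc]
      _ = ENNReal.ofReal (4 * 2 ^ s) * ENNReal.ofReal ((2:ℝ) ^ (s - 2)) ^ n := by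
          rw [← ENNReal.ofReal_pow (by positivity), ← ENNReal.ofReal_mul (by positivity)]
          congr 1
          rw [← Real.rpow_natCast ((2:ℝ) ^ (s - 2)) n,
            ← Real.rpow_mul (by norm_num : (0:ℝ) ≤ 2)]
          rw [show (2:ℝ) ^ (-(n:ℝ)) + 2 ^ (-(n:ℝ)) = 2 * 2 ^ (-(n:ℝ)) by ring]
          calc (2:ℝ) ^ (((n:ℝ) + 1) * s) * (2 * 2 ^ (-(n:ℝ))) * (2 * 2 ^ (-(n:ℝ)))
              = 4 * ((2:ℝ) ^ (((n:ℝ) + 1) * s) * 2 ^ (-(n:ℝ)) * 2 ^ (-(n:ℝ))) := by ring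
            _ = 4 * (2:ℝ) ^ (((n:ℝ) + 1) * s + -(n:ℝ) + -(n:ℝ)) := by
                rw [Real.rpow_add two_pos, Real.rpow_add two_pos]
            _ = 4 * (2:ℝ) ^ (s + (s - 2) * (n:ℝ)) := by
                rw [show ((n:ℝ) + 1) * s + -(n:ℝ) + -(n:ℝ) = s + (s - 2) * (n:ℝ) by ring]
            _ = 4 * ((2:ℝ) ^ s * 2 ^ ((s - 2) * (n:ℝ))) := by rw [Real.rpow_add two_pos]
            _ = 4 * (2:ℝ) ^ s * 2 ^ ((s - 2) * (n:ℝ)) := by ring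
  have hr1 : ENNReal.ofReal ((2:ℝ) ^ (s - 2)) < 1 := by
    rw [show (1 : ℝ≥0∞) = ENNReal.ofReal 1 by simp]
    exact (ENNReal.ofReal_lt_ofReal_iff (by norm_num)).2
      (Real.rpow_lt_one_of_one_lt_of_neg one_lt_two (by linarith))
  calc ∫⁻ x in {p : ℝ × ℝ | 0 < radOf p ∧ radOf p < 1}, ENNReal.ofReal (radOf x ^ (-s))
      ≤ ∫⁻ x in ⋃ n, S n, ENNReal.ofReal (radOf x ^ (-s)) := lintegral_mono_set hsub
    _ ≤ ∑' n, ∫⁻ x in S n, ENNReal.ofReal (radOf x ^ (-s)) := lintegral_iUnion_le _ _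
    _ ≤ ∑' n : ℕ, ENNReal.ofReal (4 * 2 ^ s) * ENNReal.ofReal ((2:ℝ) ^ (s - 2)) ^ n :=
        ENNReal.tsum_le_tsum hbound
    _ = ENNReal.ofReal (4 * 2 ^ s) * ∑' n : ℕ, ENNReal.ofReal ((2:ℝ) ^ (s - 2)) ^ n :=
        ENNReal.tsum_mul_left
    _ < ⊤ := by
        rw [ENNReal.tsum_geometric]
        refine ENNReal.mul_lt_top ENNReal.ofReal_lt_top ?_
        rw [ENNReal.inv_lt_top]
        exact tsub_pos_of_lt hr1

/-- for every `1 ≤ p < 2/(α+1)`, both `u` and `∇u` are in `L^p` of the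
sector. -/
theorem uex_and_grad_in_Lp (α : ℝ) (hα1 : 1/2 < α) (hα2 : α < 1)
    (p : ℝ) (hp1 : 1 ≤ p) (hp2 : p < 2 / (α + 1)) :
    (∫⁻ x in sector α, ENNReal.ofReal (|uex α x| ^ p)) < ⊤ ∧
    (∫⁻ x in sector α, ENNReal.ofReal ((gradNorm (uex α) x) ^ p)) < ⊤ := by
  have hα0 : 0 < α := by linarith
  set s : ℝ := p * (α + 1) with hsdef
  have hs0 : 0 < s := by positivity
  have hs2 : s < 2 := by
    rw [hsdef]
    rw [lt_div_iff₀ (by linarith : (0:ℝ) < α + 1)] at hp2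
    linarith
  have hchar := sector_eq α hα1 hα2
  have hmeas : MeasurableSet (sector α) := by
    rw [hchar]
    exact ((rad_meas measurableSet_Ioo).inter (angle_meas measurableSet_Ioo) :
      MeasurableSet (radOf ⁻¹' Ioo 0 1 ∩ angleOf ⁻¹' Ioo 0 (π / α)))
  have hsec_sub : sector α ⊆ {q : ℝ × ℝ | 0 < radOf q ∧ radOf q < 1} := by
    rw [hchar]; intro q hq; exact hq.1
  have hnull : (volume : Measure (ℝ × ℝ)) {q : ℝ × ℝ | q.2 = 0} = 0 := by
    have he : {q : ℝ × ℝ | q.2 = 0} = (univ : Set ℝ) ×ˢ ({0} : Set ℝ) := by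
      ext ⟨a, b⟩
      simp [Set.mem_prod, eq_comm]
    rw [he, show (volume : Measure (ℝ × ℝ)) = (volume : Measure ℝ).prod volume from rfl,
      Measure.prod_prod, Real.volume_singleton, mul_zero]
  have hline : ∀ᵐ x : ℝ × ℝ ∂volume, x.2 ≠ 0 := by
    rw [ae_iff]
    simpa only [not_not] using hnull
  have key : ∀ f : ℝ × ℝ → ℝ,
      (∀ᵐ x ∂(volume.restrict (sector α)), 0 ≤ f x ∧ f x ≤ 6 * radOf x ^ (-α - 1)) →
      (∫⁻ x in sector α, ENNReal.ofReal (f x ^ p)) < ⊤ := by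
    intro f hf
    have hpt : ∀ᵐ x ∂(volume.restrict (sector α)), ENNReal.ofReal (f x ^ p) ≤
        ENNReal.ofReal (6 ^ p) * ENNReal.ofReal (radOf x ^ (-s)) := by
      refine hf.mono fun x hx => ?_
      rw [← ENNReal.ofReal_mul (by positivity)]
      apply ENNReal.ofReal_le_ofReal
      calc f x ^ p ≤ (6 * radOf x ^ (-α - 1)) ^ p :=
            Real.rpow_le_rpow hx.1 hx.2 (by linarith)
        _ = 6 ^ p * (radOf x ^ (-α - 1)) ^ p :=
            Real.mul_rpow (by norm_num) (Real.rpow_nonneg (radOf_nonneg x) _)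
        _ = 6 ^ p * radOf x ^ (-s) := by
            rw [← Real.rpow_mul (radOf_nonneg x)]
            congr 2
            rw [hsdef]; ring
    calc (∫⁻ x in sector α, ENNReal.ofReal (f x ^ p))
        ≤ ∫⁻ x in sector α, ENNReal.ofReal (6 ^ p) * ENNReal.ofReal (radOf x ^ (-s)) :=
          lintegral_mono_ae hpt
      _ = ENNReal.ofReal (6 ^ p) * ∫⁻ x in sector α, ENNReal.ofReal (radOf x ^ (-s)) :=
          lintegral_const_mul' _ _ ENNReal.ofReal_ne_top
      _ ≤ ENNReal.ofReal (6 ^ p) *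
          ∫⁻ x in {q : ℝ × ℝ | 0 < radOf q ∧ radOf q < 1}, ENNReal.ofReal (radOf x ^ (-s)) :=
          mul_le_mul_right (lintegral_mono_set hsec_sub) _
      _ < ⊤ := ENNReal.mul_lt_top ENNReal.ofReal_lt_top (finite_aux s hs0 hs2)
  constructor
  · apply key
    refine (ae_restrict_mem hmeas).mono fun x hx => ?_
    rw [hchar] at hx
    exact ⟨abs_nonneg _, uex_bound α x hα0 hα2 hx.1.1 hx.1.2⟩
  · apply key
    have h2 := ae_restrict_of_ae (μ := volume) (s := sector α) hline
    refine ((ae_restrict_mem hmeas).and h2).mono fun x hx => ?_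
    rw [hchar] at hx
    exact ⟨Real.sqrt_nonneg _, grad_bound α x hα0 hα2 hx.2 hx.1.1.2⟩
end

section
/- Let 1/2 < α < 1, Ω the sector of radius 1 and angle π/α, u(r,θ) = (r^{-α} - r^{α}) sin(αθ), and let ϱ(x) denote the distance from x ∈ Ω to the boundary ∂Ω. If β ≥ 1/2, then ∫_Ω ϱ(x)^{-2β} |u(x)|² dx = ∞; i.e. u does not belong to the weighted space L²_{1/ϱ^β}(Ω) for any β ≥ 1/2. -/
open Real Set Filter Topology MeasureTheory
open scoped ENNReal

namespace UexAux

noncomputable section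

lemma polar {p : ℝ × ℝ} (hy : 0 < p.2) :
    0 < radOf p ∧ 0 < angleOf p ∧ angleOf p < π ∧
      Real.sin (angleOf p) = p.2 / radOf p ∧ Real.cos (angleOf p) = p.1 / radOf p := by
  set z : ℂ := (p.1 : ℂ) + (p.2 : ℂ) * Complex.I with hz
  have him : z.im = p.2 := by simp [hz]
  have hre : z.re = p.1 := by simp [hz]
  have hz0 : z ≠ 0 := by
    intro h
    rw [h] at him
    simp at him
    exact hy.ne him
  have habs : ‖z‖ = radOf p := by
    rw [hz, Complex.norm_add_mul_I]
    rfl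
  have hargnn : 0 ≤ Complex.arg z := Complex.arg_nonneg_iff.mpr (by rw [him]; exact hy.le)
  have hang : angleOf p = Complex.arg z := by
    rw [angleOf, if_pos hargnn]
  have harg_pos : 0 < Complex.arg z := by
    rcases hargnn.lt_or_eq with h | h
    · exact h
    · exfalso
      have := Complex.arg_eq_zero_iff.mp h.symm
      rw [him] at this
      exact hy.ne' this.2
  have harg_lt : Complex.arg z < π := by
    rcases (Complex.arg_le_pi z).lt_or_eq with h | h
    · exact h
    · exfalso
      have := Complex.arg_eq_pi_iff.mp h
      rw [him] at this
      exact hy.ne' this.2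
  have hrpos : 0 < radOf p := by
    rw [← habs]
    exact (norm_pos_iff.mpr hz0)
  refine ⟨hrpos, by rw [hang]; exact harg_pos, by rw [hang]; exact harg_lt, ?_, ?_⟩
  · rw [hang, Complex.sin_arg, him, habs]
  · rw [hang, Complex.cos_arg hz0, hre, habs]

lemma mem_sector {α : ℝ} (hα0 : 0 < α) (hα2 : α < 1) {p : ℝ × ℝ}
    (hy : 0 < p.2) (hr : radOf p < 1) : p ∈ sector α := by
  obtain ⟨hrpos, hθ0, hθπ, hsin, hcos⟩ := polar hy
  refine ⟨radOf p, angleOf p, hrpos, hr, hθ0, ?_, ?_⟩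
  · have : π < π / α := by
      rw [lt_div_iff₀ hα0]
      nlinarith [pi_pos]
    linarith
  · rw [hsin, hcos]
    have h0 : radOf p ≠ 0 := hrpos.ne'
    ext <;> simp <;> field_simp

lemma origin_mem_frontier {α : ℝ} (hα0 : 0 < α) (hα2 : α < 1) :
    ((0 : ℝ), (0 : ℝ)) ∈ frontier (sector α) := by
  show ((0:ℝ),(0:ℝ)) ∈ closure (sector α) \ interior (sector α)
  constructor
  · rw [Metric.mem_closure_iff]
    intro ε hε
    refine ⟨(0, min ε 1 / 2), ?_, ?_⟩
    · apply mem_sector hα0 hα2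
      · simp only []
        positivity
      · show Real.sqrt ((0:ℝ)^2 + (min ε 1 / 2)^2) < 1
        rw [zero_pow (by norm_num), zero_add, Real.sqrt_sq (by positivity)]
        have := min_le_right ε 1
        linarith
    · rw [Prod.dist_eq]
      simp only [Real.dist_eq]
      have h1 : min ε 1 ≤ ε := min_le_left _ _
      have h2 : (0:ℝ) < min ε 1 := by positivity
      rw [max_lt_iff]
      refine ⟨by simpa using hε, ?_⟩
      rw [abs_sub_comm, sub_zero, abs_of_nonneg (by linarith)]
      linarith
  · intro h
    have : ((0:ℝ), (0:ℝ)) ∈ sector α := interior_subset h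
    obtain ⟨r, θ, hr, _, _, _, hp⟩ := this
    have h1 : r * Real.cos θ = 0 := by
      have := congrArg Prod.fst hp; simpa using this.symm
    have h2 : r * Real.sin θ = 0 := by
      have := congrArg Prod.snd hp; simpa using this.symm
    have hp := Real.sin_sq_add_cos_sq θ
    have hr2 : r ^ 2 = 0 := by
      linear_combination (r * Real.sin θ) * h2 + (r * Real.cos θ) * h1 - r ^ 2 * hp
    exact absurd hr2 (by positivity)

lemma sin_mul_ge {θ a : ℝ} (hθ1 : 0 ≤ θ) (hθ2 : θ ≤ π) (ha1 : 0 ≤ a) (ha2 : a ≤ 1) :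
    a * Real.sin θ ≤ Real.sin (a * θ) := by
  have hc := strictConcaveOn_sin_Icc.concaveOn
  have h := hc.2 (⟨le_rfl, pi_pos.le⟩ : (0:ℝ) ∈ Icc 0 π) (⟨hθ1, hθ2⟩ : θ ∈ Icc 0 π)
    (sub_nonneg.mpr ha2) ha1 (by ring : (1 - a) + a = 1)
  simpa [smul_eq_mul] using h

lemma est {n : ℕ} {x : ℝ × ℝ}
    (hx : x ∈ Metric.ball (((0:ℝ), 3 * (1/2:ℝ)^(n+4))) ((1/2:ℝ)^(n+4) / 2)) :
    |x.1| < (1/2:ℝ)^(n+4)/2 ∧ 5*(1/2:ℝ)^(n+4)/2 < x.2 ∧ x.2 < 7*(1/2:ℝ)^(n+4)/2 ∧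
      x.2 ≤ radOf x ∧ radOf x ≤ 4*(1/2:ℝ)^(n+4) := by
  set q := (1/2:ℝ)^(n+4) with hq
  have hqpos : 0 < q := by positivity
  rw [Metric.mem_ball, Prod.dist_eq, max_lt_iff] at hx
  obtain ⟨h1, h2⟩ := hx
  rw [Real.dist_eq] at h1 h2
  have hx1 : |x.1| < q/2 := by simpa using h1
  have hx2 := abs_lt.mp h2
  have hx1' := abs_lt.mp hx1
  have hy1 : 5*q/2 < x.2 := by linarith
  have hy2 : x.2 < 7*q/2 := by linarith
  have hrle : radOf x ≤ 4*q := by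
    have e1 : x.1^2 ≤ (q/2)^2 := sq_le_sq' (by linarith [hx1'.1]) hx1'.2.le
    have e2 : x.2^2 ≤ (7*q/2)^2 := sq_le_sq' (by linarith) (by linarith)
    have h : x.1^2 + x.2^2 ≤ (4*q)^2 := by
      calc x.1^2 + x.2^2 ≤ (q/2)^2 + (7*q/2)^2 := add_le_add e1 e2
        _ ≤ (4*q)^2 := by linarith [sq_nonneg q]
    have h' := Real.sqrt_le_sqrt h
    rwa [Real.sqrt_sq (by positivity)] at h'
  have hyr : x.2 ≤ radOf x := by
    rw [radOf]
    calc x.2 = Real.sqrt (x.2^2) := (Real.sqrt_sq (by linarith)).symm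
      _ ≤ Real.sqrt (x.1^2 + x.2^2) := Real.sqrt_le_sqrt (by linarith [sq_nonneg x.1])
  exact ⟨hx1, hy1, hy2, hyr, hrle⟩

lemma q_small (n : ℕ) : ((1:ℝ)/2)^(n+4) ≤ 1/16 := by
  calc ((1:ℝ)/2)^(n+4) ≤ ((1:ℝ)/2)^4 :=
        pow_le_pow_of_le_one (by norm_num) (by norm_num) (by omega)
    _ = 1/16 := by norm_num

lemma ball_subset_sector {α : ℝ} (hα0 : 0 < α) (hα2 : α < 1) (n : ℕ) :
    Metric.ball (((0:ℝ), 3 * (1/2:ℝ)^(n+4))) ((1/2:ℝ)^(n+4) / 2) ⊆ sector α := by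
  intro x hx
  obtain ⟨_, hy1, _, _, hrle⟩ := est hx
  have hqpos : (0:ℝ) < (1/2:ℝ)^(n+4) := by positivity
  have hq16 := q_small n
  exact mem_sector hα0 hα2 (by linarith) (by linarith)

set_option maxHeartbeats 1000000 in
lemma pointwise_bound {α β : ℝ} (hα1 : 1/2 < α) (hα2 : α < 1) (hβ : 1/2 ≤ β)
    (n : ℕ) {x : ℝ × ℝ}
    (hx : x ∈ Metric.ball (((0:ℝ), 3 * (1/2:ℝ)^(n+4))) ((1/2:ℝ)^(n+4) / 2)) :
    25 * 4^n / 64 ≤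
      (Metric.infDist x (frontier (sector α))) ^ (-(2*β)) * (uex α x)^2 := by
  have hα0 : (0:ℝ) < α := by linarith
  obtain ⟨hx1, hy1, hy2, hyr, hrle⟩ := est hx
  set q := (1/2:ℝ)^(n+4) with hqdef
  have hqpos : 0 < q := by positivity
  have hq16 : q ≤ 1/16 := q_small n
  have hy0 : 0 < x.2 := by linarith
  set r := radOf x with hrdef
  have hr0 : 0 < r := lt_of_lt_of_le hy0 hyr
  have hr1 : r ≤ 1/4 := by linarith
  have hru : r ≤ 1 := by linarith
  set ρ := Metric.infDist x (frontier (sector α)) with hρdef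
  have hx1' := abs_lt.mp hx1
  have hρ_le : ρ ≤ 4*q := by
    have h0 := origin_mem_frontier hα0 hα2
    refine le_trans (Metric.infDist_le_dist_of_mem h0) ?_
    rw [Prod.dist_eq]
    apply max_le
    · rw [Real.dist_eq, sub_zero]
      linarith [hx1'.1, hx1'.2, abs_lt.mpr hx1']
    · rw [Real.dist_eq, sub_zero, abs_of_nonneg hy0.le]
      linarith
  have hρ_pos : 0 < ρ := by
    have hxint : x ∈ interior (sector α) :=
      interior_maximal (ball_subset_sector hα0 hα2 n) Metric.isOpen_ball hx
    have hxF : x ∉ frontier (sector α) := fun h => h.2 hxint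
    exact (isClosed_frontier.notMem_iff_infDist_pos
      ⟨_, origin_mem_frontier hα0 hα2⟩).mp hxF
  -- weight bound
  have hw1 : (4*q)^(-(2*β)) ≤ ρ^(-(2*β)) :=
    Real.rpow_le_rpow_of_nonpos hρ_pos hρ_le (by linarith)
  have hw2 : (4*q)^(-(1:ℝ)) ≤ (4*q)^(-(2*β)) :=
    Real.rpow_le_rpow_of_exponent_ge (by positivity) (by linarith) (by linarith)
  set B := (4*q)⁻¹ with hB
  have hBmul : (4*q) * (2:ℝ)^(n+2) = 1 := by
    have h1 : ((1:ℝ)/2)^(n+4) * (2:ℝ)^(n+4) = 1 := by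
      rw [← mul_pow]; norm_num
    have h2 : (2:ℝ)^(n+4) = (2:ℝ)^(n+2) * 4 := by
      ring
    rw [hqdef]
    linear_combination h1 - ((1:ℝ)/2)^(n+4) * h2
  have hBval : B = (2:ℝ)^(n+2) := inv_eq_of_mul_eq_one_right hBmul
  have hB1 : (1:ℝ) ≤ B := by
    rw [hBval]
    calc (1:ℝ) = 1^(n+2) := (one_pow _).symm
    _ ≤ 2^(n+2) := pow_le_pow_left₀ (by norm_num) (by norm_num) _
  have hBρ : B ≤ ρ^(-(2*β)) := by
    rw [hB, ← Real.rpow_neg_one (4*q)]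
    exact le_trans hw2 hw1
  -- angle facts
  obtain ⟨hr0', hθ0, hθπ, hsin, hcos⟩ := polar hy0
  have hsab : 5/8 ≤ x.2 / r := by
    rw [le_div_iff₀ hr0]
    linarith
  have hsin_ge : 5/16 ≤ Real.sin (α * angleOf x) := by
    have h := sin_mul_ge hθ0.le hθπ.le hα0.le hα2.le
    rw [hsin] at h
    have h5 : (1/2:ℝ) * (5/8) ≤ α * (x.2 / r) :=
      mul_le_mul hα1.le hsab (by norm_num) (by linarith)
    linarith
  -- rpow facts
  have hpa : r ^ α ≤ 1/2 := by
    have h1 : r ^ α ≤ r ^ ((1:ℝ)/2) :=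
      Real.rpow_le_rpow_of_exponent_ge hr0 hru (by linarith)
    have h2 : r ^ ((1:ℝ)/2) ≤ (1/4:ℝ) ^ ((1:ℝ)/2) :=
      Real.rpow_le_rpow hr0.le hr1 (by norm_num)
    have h3 : (1/4:ℝ) ^ ((1:ℝ)/2) = 1/2 := by
      rw [show (1/4:ℝ) = (1/2:ℝ)^(2:ℕ) by norm_num,
        ← Real.rpow_natCast ((1:ℝ)/2) 2, ← Real.rpow_mul (by norm_num)]
      norm_num
    linarith
  set A := (4*q) ^ (-(1/2):ℝ) with hA
  have hpb : A ≤ r ^ (-α) := by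
    have h1 : (4*q:ℝ) ^ (-(1/2):ℝ) ≤ r ^ (-(1/2):ℝ) :=
      Real.rpow_le_rpow_of_nonpos hr0 hrle (by norm_num)
    have h2 : r ^ (-(1/2):ℝ) ≤ r ^ (-α) :=
      Real.rpow_le_rpow_of_exponent_ge hr0 hru (by linarith)
    linarith
  have hA1 : (1:ℝ) ≤ A :=
    Real.one_le_rpow_of_pos_of_le_one_of_nonpos (by positivity) (by linarith) (by norm_num)
  have hAA : A * A = B := by
    rw [hA, ← Real.rpow_add (by positivity : (0:ℝ) < 4*q),
      show (-(1/2:ℝ)) + (-(1/2:ℝ)) = -1 by norm_num, Real.rpow_neg_one]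
  -- u bound
  have hu : uex α x = (r ^ (-α) - r ^ α) * Real.sin (α * angleOf x) := by
    rw [uex, ← hrdef]
  have hfac : A/2 ≤ r ^ (-α) - r ^ α := by linarith
  have hu_ge : A/2 * (5/16) ≤ uex α x := by
    rw [hu]
    exact mul_le_mul hfac hsin_ge (by norm_num) (by linarith)
  have hu2 : (A/2 * (5/16))^2 ≤ (uex α x)^2 :=
    pow_le_pow_left₀ (by positivity) hu_ge 2
  have huval : (A/2 * (5/16))^2 = 25 * B / 1024 := by
    have h : (A/2 * (5/16))^2 = A*A*25/1024 := by ring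
    rw [h, hAA]
    ring
  have hmul : B * (25 * B / 1024) ≤ ρ^(-(2*β)) * (uex α x)^2 := by
    apply mul_le_mul hBρ (le_trans (le_of_eq huval.symm) hu2) (by positivity)
      (Real.rpow_nonneg hρ_pos.le _)
  have hB2 : B * B = 16 * (4:ℝ)^n := by
    rw [hBval, ← mul_pow]
    rw [show (2:ℝ)*2 = 4 by norm_num, pow_add]
    ring
  have hid : B * (25 * B / 1024) = 25 * (4:ℝ)^n / 64 := by
    have h : B * (25 * B / 1024) = 25 * (B * B) / 1024 := by ring
    rw [h, hB2]; ring
  linarith [hmul, hid]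

end

end UexAux


/-- for every `β ≥ 1/2`, `∫_Ω ϱ^{-2β} |u|² = ∞`, where `ϱ` is the
distance to the boundary of the sector; i.e. `u ∉ L²_{1/ϱ^β}(Ω)`. -/
theorem uex_not_in_weighted_L2 (α : ℝ) (hα1 : 1/2 < α) (hα2 : α < 1)
    (β : ℝ) (hβ : 1/2 ≤ β) :
    (∫⁻ x in sector α,
      ENNReal.ofReal ((Metric.infDist x (frontier (sector α))) ^ (-(2*β))
        * (uex α x) ^ 2)) = ⊤ := by
  have hα0 : (0:ℝ) < α := by linarith
  set f : ℝ × ℝ → ℝ≥0∞ := fun x => ENNReal.ofReal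
    ((Metric.infDist x (frontier (sector α))) ^ (-(2*β)) * (uex α x) ^ 2) with hf
  set S : ℕ → Set (ℝ × ℝ) := fun n =>
    Metric.ball (((0:ℝ), 3 * (1/2:ℝ)^(n+4))) ((1/2:ℝ)^(n+4) / 2) with hS
  have hSmeas : ∀ n, MeasurableSet (S n) := fun n => measurableSet_ball
  have hdisj : Pairwise (Function.onFun Disjoint S) := by
    have key : ∀ m n : ℕ, m < n → Disjoint (S m) (S n) := by
      intro m n hmn
      rw [Set.disjoint_left]
      intro x hxm hxn
      obtain ⟨_, hy1, _, _, _⟩ := UexAux.est hxm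
      obtain ⟨_, _, hy2, _, _⟩ := UexAux.est hxn
      have hle : ((1:ℝ)/2)^(n+4) ≤ ((1:ℝ)/2)^(m+5) :=
        pow_le_pow_of_le_one (by norm_num) (by norm_num) (by omega)
      have hq : ((1:ℝ)/2)^(m+5) = ((1:ℝ)/2)^(m+4) / 2 := by ring
      have hqpos : (0:ℝ) < ((1:ℝ)/2)^(m+4) := by positivity
      rw [hq] at hle
      linarith
    intro m n hmn
    rcases hmn.lt_or_gt with h | h
    · exact key m n h
    · exact (key n m h).symm
  have hUsub : (⋃ n, S n) ⊆ sector α :=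
    Set.iUnion_subset fun n => UexAux.ball_subset_sector hα0 hα2 n
  have hterm : ∀ n : ℕ, ENNReal.ofReal (25/16384) ≤ ∫⁻ x in S n, f x := by
    intro n
    have h1 : ∫⁻ _ in S n, ENNReal.ofReal (25 * 4^n / 64) ≤ ∫⁻ x in S n, f x := by
      apply setLIntegral_mono' (hSmeas n)
      intro x hx
      exact ENNReal.ofReal_le_ofReal (UexAux.pointwise_bound hα1 hα2 hβ n hx)
    rw [setLIntegral_const] at h1
    refine le_trans ?_ h1
    have hvol : volume (S n) =
        ENNReal.ofReal ((1/2:ℝ)^(n+4)) * ENNReal.ofReal ((1/2:ℝ)^(n+4)) := by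
      rw [hS]
      simp only []
      rw [← ball_prod_same, MeasureTheory.Measure.volume_eq_prod,
        MeasureTheory.Measure.prod_prod, Real.volume_ball, Real.volume_ball,
        show 2 * ((1/2:ℝ)^(n+4)/2) = (1/2:ℝ)^(n+4) by ring]
    rw [hvol, ← ENNReal.ofReal_mul (by positivity), ← ENNReal.ofReal_mul (by positivity)]
    apply ENNReal.ofReal_le_ofReal
    have h4 : (4:ℝ)^n * (((1:ℝ)/2)^n * ((1:ℝ)/2)^n) = 1 := by
      rw [← mul_pow, ← mul_pow]; norm_num
    have hb : ((1:ℝ)/2)^(n+4) = ((1:ℝ)/2)^n * (1/16) := by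
      rw [pow_add]; norm_num
    rw [hb]
    refine le_of_eq ?_
    linear_combination (-(25/16384) : ℝ) * h4
  have hsum : (⊤:ℝ≥0∞) ≤ ∑' n, ∫⁻ x in S n, f x := by
    calc (⊤:ℝ≥0∞) = ∑' _ : ℕ, ENNReal.ofReal (25/16384) :=
        (ENNReal.tsum_const_eq_top_of_ne_zero (by
          simp only [ne_eq, ENNReal.ofReal_eq_zero, not_le]
          norm_num)).symm
      _ ≤ _ := ENNReal.tsum_le_tsum hterm
  have hle2 : ∑' n, ∫⁻ x in S n, f x ≤ ∫⁻ x in sector α, f x := by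
    rw [← lintegral_iUnion hSmeas hdisj]
    exact lintegral_mono' (Measure.restrict_mono hUsub le_rfl) le_rfl
  exact top_unique (le_trans hsum hle2)
end
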